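/- Let f(X) = a₀ + a₁X + ⋯ + a_nXⁿ ∈ ℤ[X] with a₀ ≠ 0 and |a_n| > 2|a_{n−1}| + 2²|a_{n−2}| + ⋯ + 2ⁿ|a₀|. If there exists a nonzero integer b and a prime p > |a₀| with |f(b)| = p^k for some k ≥ 1, then f is a product of at most 1 + ⌊(k − 1)·log p / log(p/|a₀|)⌋ irreducible factors over ℚ. -/

import Mathlib

open Polynomial Real

noncomputable section

/-- Port helper: the complex absolute value, as an absolute value given by the norm. -/
def Complex.abs : AbsoluteValue ℂ ℝ := NormedField.toAbsoluteValue ℂ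

lemma Complex.abs_intCast (n : ℤ) : Complex.abs (n : ℂ) = |(n : ℝ)| := Complex.norm_intCast n

lemma Complex.norm_eq_abs (z : ℂ) : ‖z‖ = Complex.abs z := rfl

/-- Scale a nonzero rational polynomial to a primitive integer polynomial. -/
lemma exists_int_poly (q : Polynomial ℚ) (hq : q ≠ 0) :
    ∃ (Q : Polynomial ℤ) (c : ℚ), c ≠ 0 ∧ Q.IsPrimitive ∧
      Q.map (Int.castRingHom ℚ) = Polynomial.C c * q := by
  obtain ⟨⟨d, hd⟩, hmap⟩ :=
    IsLocalization.integerNormalization_map_to_map (nonZeroDivisors ℤ) q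
  set N := IsLocalization.integerNormalization (nonZeroDivisors ℤ) q with hN
  have hNne : N ≠ 0 := fun h => hq (IsFractionRing.integerNormalization_eq_zero_iff.mp h)
  have hd0 : d ≠ 0 := nonZeroDivisors.ne_zero hd
  have hcont : N.content ≠ 0 := fun h => hNne (content_eq_zero_iff.mp h)
  have hcQ : ((N.content : ℚ)) ≠ 0 := Int.cast_ne_zero.mpr hcont
  have hdQ : ((d : ℚ)) ≠ 0 := Int.cast_ne_zero.mpr hd0
  refine ⟨N.primPart, (d : ℚ) * ((N.content : ℚ))⁻¹, by positivity, N.isPrimitive_primPart, ?_⟩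
  have h1 : N.map (Int.castRingHom ℚ)
      = Polynomial.C ((N.content : ℚ)) * N.primPart.map (Int.castRingHom ℚ) := by
    conv_lhs => rw [N.eq_C_content_mul_primPart]
    simp [Polynomial.map_mul]
  have h2 : N.map (Int.castRingHom ℚ) = Polynomial.C ((d : ℚ)) * q := by
    rw [algebraMap_int_eq] at hmap
    rw [hmap, zsmul_eq_mul]
    norm_cast
  have key : Polynomial.C ((N.content : ℚ)) * (Polynomial.C ((d : ℚ) * ((N.content : ℚ))⁻¹) * q)
      = Polynomial.C ((d : ℚ)) * q := by
    rw [← mul_assoc, ← Polynomial.C_mul]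
    congr 2
    field_simp
  have hC : (Polynomial.C ((N.content : ℚ))) ≠ 0 := by
    simpa using hcQ
  exact mul_left_cancel₀ hC (h1.symm.trans (h2.trans key.symm))

lemma root_small (f : Polynomial ℤ)
    (hlead : |f.leadingCoeff| >
      ∑ i ∈ Finset.range f.natDegree, 2 ^ (f.natDegree - i) * |f.coeff i|)
    (z : ℂ) (hz : (f.map (Int.castRingHom ℂ)).eval z = 0) : Complex.abs z < 1/2 := by
  by_contra hcon
  push_neg at hcon
  set n := f.natDegree with hn
  set x := Complex.abs z with hx
  have hx0 : (0:ℝ) < x := lt_of_lt_of_le (by norm_num) hcon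
  rw [Polynomial.eval_map, Polynomial.eval₂_eq_sum_range] at hz
  rw [Finset.sum_range_succ] at hz
  have heq : ((f.coeff n : ℂ)) * z ^ n = -∑ i ∈ Finset.range n, (f.coeff i : ℂ) * z ^ i := by
    rw [eq_neg_iff_add_eq_zero, add_comm]
    simpa [hn] using hz
  have habs : |(f.coeff n : ℝ)| * x ^ n ≤ ∑ i ∈ Finset.range n, |(f.coeff i : ℝ)| * x ^ i := by
    have := congrArg Complex.abs heq
    rw [map_neg_eq_map, map_mul, map_pow] at this
    calc |(f.coeff n : ℝ)| * x ^ n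
        = Complex.abs ((f.coeff n : ℂ)) * x ^ n := by rw [Complex.abs_intCast]
      _ = Complex.abs (∑ i ∈ Finset.range n, (f.coeff i : ℂ) * z ^ i) := this
      _ ≤ ∑ i ∈ Finset.range n, Complex.abs ((f.coeff i : ℂ) * z ^ i) := by
          exact AbsoluteValue.sum_le _ _ _
      _ = ∑ i ∈ Finset.range n, |(f.coeff i : ℝ)| * x ^ i := by
          refine Finset.sum_congr rfl fun i _ => ?_
          rw [map_mul, map_pow, Complex.abs_intCast]
  have hstep : ∀ i ∈ Finset.range n, |(f.coeff i : ℝ)| * x ^ i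
      ≤ (2 ^ (n - i) * |(f.coeff i : ℝ)|) * x ^ n := by
    intro i hi
    have hi' : i ≤ n := le_of_lt (Finset.mem_range.mp hi)
    have hxpow : x ^ i ≤ 2 ^ (n - i) * x ^ n := by
      have h1 : ((1:ℝ)/2) ^ (n - i) * x ^ i ≤ x ^ (n - i) * x ^ i :=
        mul_le_mul_of_nonneg_right (pow_le_pow_left₀ (by norm_num) hcon _) (by positivity)
      have h2 : x ^ (n - i) * x ^ i = x ^ n := by
        rw [← pow_add]
        congr 1
        omega
      have h3 : (2:ℝ) ^ (n - i) * (((1:ℝ)/2) ^ (n - i) * x ^ i) ≤ 2 ^ (n - i) * x ^ n := by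
        rw [h2] at h1
        exact mul_le_mul_of_nonneg_left h1 (by positivity)
      calc x ^ i = (2:ℝ) ^ (n - i) * (((1:ℝ)/2) ^ (n - i) * x ^ i) := by
            rw [← mul_assoc, ← mul_pow]
            norm_num
        _ ≤ 2 ^ (n - i) * x ^ n := h3
    calc |(f.coeff i : ℝ)| * x ^ i ≤ |(f.coeff i : ℝ)| * (2 ^ (n - i) * x ^ n) :=
          mul_le_mul_of_nonneg_left hxpow (abs_nonneg _)
      _ = (2 ^ (n - i) * |(f.coeff i : ℝ)|) * x ^ n := by ring
  have hsum : ∑ i ∈ Finset.range n, |(f.coeff i : ℝ)| * x ^ i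
      ≤ (∑ i ∈ Finset.range n, 2 ^ (n - i) * |(f.coeff i : ℝ)|) * x ^ n := by
    rw [Finset.sum_mul]
    exact Finset.sum_le_sum hstep
  have hleadR : (∑ i ∈ Finset.range n, 2 ^ (n - i) * |(f.coeff i : ℝ)|) < |(f.coeff n : ℝ)| := by
    have : f.leadingCoeff = f.coeff n := rfl
    rw [this] at hlead
    push_cast [← Int.cast_abs]
    exact_mod_cast hlead
  have : |(f.coeff n : ℝ)| * x ^ n < |(f.coeff n : ℝ)| * x ^ n :=
    lt_of_le_of_lt (le_trans habs hsum)
      (by exact (mul_lt_mul_of_pos_right hleadR (by positivity)))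
  exact lt_irrefl _ this

lemma multiset_prod_le {s : Multiset ℂ} {F G : ℂ → ℝ}
    (h1 : ∀ a ∈ s, 0 < F a) (h2 : ∀ a ∈ s, F a ≤ G a) :
    (s.map F).prod ≤ (s.map G).prod ∧ 0 < (s.map F).prod := by
  induction s using Multiset.induction_on with
  | empty => simp
  | cons a t ih =>
    have ih' := ih (fun x hx => h1 x (Multiset.mem_cons_of_mem hx))
      (fun x hx => h2 x (Multiset.mem_cons_of_mem hx))
    have ha1 := h1 a (Multiset.mem_cons_self a t)
    have ha2 := h2 a (Multiset.mem_cons_self a t)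
    simp only [Multiset.map_cons, Multiset.prod_cons]
    constructor
    · exact mul_le_mul ha2 ih'.1 (le_of_lt ih'.2) (le_trans (le_of_lt ha1) ha2)
    · exact mul_pos ha1 ih'.2

lemma multiset_prod_lt {s : Multiset ℂ} {F G : ℂ → ℝ} (hs : s ≠ 0)
    (h1 : ∀ a ∈ s, 0 < F a) (h2 : ∀ a ∈ s, F a < G a) :
    (s.map F).prod < (s.map G).prod := by
  obtain ⟨a, ha⟩ := Multiset.exists_mem_of_ne_zero hs
  obtain ⟨t, rfl⟩ : ∃ t, s = a ::ₘ t := ⟨s.erase a, (Multiset.cons_erase ha).symm⟩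
  have ih := multiset_prod_le (s := t) (F := F) (G := G)
    (fun x hx => h1 x (Multiset.mem_cons_of_mem hx))
    (fun x hx => le_of_lt (h2 x (Multiset.mem_cons_of_mem hx)))
  have ha1 := h1 a (Multiset.mem_cons_self a t)
  have ha2 := h2 a (Multiset.mem_cons_self a t)
  simp only [Multiset.map_cons, Multiset.prod_cons]
  exact mul_lt_mul ha2 ih.1 ih.2 (ha1.trans ha2).le

lemma eval_abs_lt (f : Polynomial ℤ) (ha0 : f.coeff 0 ≠ 0)
    (hlead : |f.leadingCoeff| >
      ∑ i ∈ Finset.range f.natDegree, 2 ^ (f.natDegree - i) * |f.coeff i|)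
    (b : ℤ) (hb : b ≠ 0) (Q : Polynomial ℤ) (hQ : Q ∣ f) (hd : 0 < Q.natDegree) :
    |Q.eval 0| < |Q.eval b| := by
  set φ := Int.castRingHom ℂ with hφ
  set QC := Q.map φ with hQC
  have hQne : Q ≠ 0 := fun h => by simp [h] at hd
  have hQCne : QC ≠ 0 := by
    simpa [hQC] using (Polynomial.map_ne_zero_iff (f := φ) Int.cast_injective).mpr hQne
  have hsplit : Polynomial.Splits QC := IsAlgClosed.splits QC
  have hroots : ∀ z ∈ QC.roots, Complex.abs z < 1/2 ∧ z ≠ 0 := by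
    intro z hz
    have hzr : QC.eval z = 0 := (Polynomial.mem_roots hQCne).mp hz
    obtain ⟨R, hR⟩ := hQ
    have hfz : (f.map φ).eval z = 0 := by
      rw [hR, Polynomial.map_mul, Polynomial.eval_mul, hzr, zero_mul]
    refine ⟨root_small f hlead z hfz, ?_⟩
    rintro rfl
    have h0 : (f.map φ).eval 0 = ((f.eval 0 : ℤ) : ℂ) := by
      rw [Polynomial.eval_map]
      simpa using Polynomial.eval₂_at_apply φ 0
    rw [h0] at hfz
    rw [Polynomial.coeff_zero_eq_eval_zero] at ha0
    exact ha0 (by exact_mod_cast hfz)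
  have hQeval : ∀ w : ℤ, QC.eval ((w : ℤ) : ℂ) = ((Q.eval w : ℤ) : ℂ) := by
    intro w
    rw [hQC, Polynomial.eval_map]
    exact Polynomial.eval₂_at_apply φ w
  have hfactor : ∀ w : ℂ, Complex.abs (QC.eval w)
      = Complex.abs QC.leadingCoeff * (QC.roots.map (fun a => Complex.abs (w - a))).prod := by
    intro w
    conv_lhs => rw [hsplit.eq_prod_roots]
    rw [Polynomial.eval_mul, Polynomial.eval_C, map_mul, Polynomial.eval_multiset_prod,
      Multiset.map_map]
    rw [map_multiset_prod, Multiset.map_map]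
    congr 1
    apply congrArg
    apply Multiset.map_congr rfl
    intro a _
    simp
  have hrne : QC.roots ≠ 0 := by
    have hcard : QC.roots.card = QC.natDegree := (Polynomial.splits_iff_card_roots).mp hsplit
    intro h
    rw [h] at hcard
    have : QC.natDegree = Q.natDegree := Polynomial.natDegree_map_eq_of_injective Int.cast_injective Q
    simp [this] at hcard
    omega
  have hlc : 0 < Complex.abs QC.leadingCoeff := by
    simpa using Polynomial.leadingCoeff_ne_zero.mpr hQCne
  have hkey : (QC.roots.map (fun a => Complex.abs ((0:ℂ) - a))).prod
      < (QC.roots.map (fun a => Complex.abs (((b:ℤ):ℂ) - a))).prod := by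
    apply multiset_prod_lt hrne
    · intro a ha
      have := hroots a ha
      simpa using this.2
    · intro a ha
      obtain ⟨ha2, ha0'⟩ := hroots a ha
      have h1 : (1:ℝ) ≤ Complex.abs ((b:ℤ):ℂ) := by
        rw [Complex.abs_intCast]
        exact_mod_cast Int.one_le_abs hb
      have h2 : Complex.abs ((b:ℤ):ℂ) - Complex.abs a ≤ Complex.abs (((b:ℤ):ℂ) - a) := by
        simpa [Complex.norm_eq_abs, Complex.abs_intCast] using norm_sub_norm_le ((b:ℤ):ℂ) a
      have : Complex.abs a < 1 - Complex.abs a := by linarith [ha2]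
      calc Complex.abs ((0:ℂ) - a) = Complex.abs a := by simp
        _ < 1 - Complex.abs a := this
        _ ≤ Complex.abs (((b:ℤ):ℂ) - a) := by linarith
  have hmain : Complex.abs (QC.eval ((0:ℤ):ℂ)) < Complex.abs (QC.eval ((b:ℤ):ℂ)) := by
    rw [hfactor, hfactor]
    have : ((0:ℤ):ℂ) = (0:ℂ) := by norm_num
    rw [this]
    exact mul_lt_mul_of_pos_left hkey hlc
  rw [hQeval, hQeval] at hmain
  rw [Complex.abs_intCast, Complex.abs_intCast] at hmain
  exact_mod_cast hmain

/-- `d` is an admissible divisor of `f(a)`. -/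
def AdmDiv (f : Polynomial ℤ) (a d : ℤ) : Prop :=
  d ∣ f.eval a ∧
    Int.gcd d (f.eval a / d) ∣ Int.gcd (f.eval a) (f.derivative.eval a)

/-- `d` is a unitary divisor of `N`. -/
def UnitDiv (N d : ℤ) : Prop := d ∣ N ∧ Int.gcd d (N / d) = 1

/-- `f` is a product of at most `k` nonconstant irreducible factors over `ℚ`
(counting multiplicities): it cannot be written as a product of `k + 1`
nonconstant polynomials over `ℚ`. -/
def FactorsAtMost (f : Polynomial ℤ) (k : ℕ) : Prop :=
  ∀ g : Fin (k + 1) → Polynomial ℚ, (∀ i, 0 < (g i).natDegree) →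
    f.map (Int.castRingHom ℚ) ≠ ∏ i, g i

/-- `q` is the quantity `q_k` of the paper: the greatest ratio `d₂/d₁` of
admissible divisors of `f(b)` and `f(a)` not exceeding `(|f(b)|/|f(a)|)^(1/(k+1))`. -/
def IsQk (f : Polynomial ℤ) (a b : ℤ) (k : ℕ) (q : ℝ) : Prop :=
  IsGreatest {x : ℝ | ∃ d₁ d₂ : ℤ, AdmDiv f a d₁ ∧ AdmDiv f b d₂ ∧
    x = (d₂ : ℝ) / (d₁ : ℝ) ∧
    x ≤ (|((f.eval b : ℤ) : ℝ)| / |((f.eval a : ℤ) : ℝ)|) ^ ((k + 1 : ℝ))⁻¹} q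

/-- `q` is the quantity `q^u_k` of the paper, defined via unitary divisors. -/
def IsQuk (f : Polynomial ℤ) (a b : ℤ) (k : ℕ) (q : ℝ) : Prop :=
  IsGreatest {x : ℝ | ∃ d₁ d₂ : ℤ, UnitDiv (f.eval a) d₁ ∧ UnitDiv (f.eval b) d₂ ∧
    x = (d₂ : ℝ) / (d₁ : ℝ) ∧
    x ≤ (|((f.eval b : ℤ) : ℝ)| / |((f.eval a : ℤ) : ℝ)|) ^ ((k + 1 : ℝ))⁻¹} q

theorem stmt9 (f : Polynomial ℤ) (ha0 : f.coeff 0 ≠ 0)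
    (hlead : |f.leadingCoeff| >
      ∑ i ∈ Finset.range f.natDegree, 2 ^ (f.natDegree - i) * |f.coeff i|)
    (b : ℤ) (hb : b ≠ 0) (p : ℕ) (hp : p.Prime) (hpa0 : (p : ℤ) > |f.coeff 0|)
    (k : ℕ) (hk : 1 ≤ k) (hfb : (f.eval b).natAbs = p ^ k) :
    FactorsAtMost f
      (1 + (⌊((k : ℝ) - 1) * Real.logb ((p : ℝ) / (|f.coeff 0| : ℝ)) (p : ℝ)⌋).toNat) := by
  intro g hg hprod
  have hfne : f ≠ 0 := fun h => ha0 (by simp [h])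
  -- Step 1: the bound is at least k
  have ha1 : (1:ℝ) ≤ |((f.coeff 0 : ℤ) : ℝ)| := by
    rw [← Int.cast_abs]
    exact_mod_cast Int.one_le_abs ha0
  have hpR : |((f.coeff 0 : ℤ) : ℝ)| < (p : ℝ) := by
    rw [← Int.cast_abs]
    exact_mod_cast hpa0
  have hbase : (1:ℝ) < (p:ℝ) / |((f.coeff 0 : ℤ) : ℝ)| := (one_lt_div (by linarith)).mpr hpR
  have hL : (1:ℝ) ≤ Real.logb ((p : ℝ) / |((f.coeff 0 : ℤ) : ℝ)|) (p : ℝ) := by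
    rw [Real.logb, le_div_iff₀ (Real.log_pos hbase), one_mul]
    apply Real.log_le_log (by positivity)
    exact div_le_self (by positivity) ha1
  have hfl : ((k:ℤ) - 1) ≤ ⌊((k : ℝ) - 1) * Real.logb ((p : ℝ) / (|f.coeff 0| : ℝ)) (p : ℝ)⌋ := by
    apply Int.le_floor.mpr
    push_cast
    refine le_trans (by norm_num) (le_mul_of_one_le_right ?_ hL)
    have : (1:ℝ) ≤ (k:ℝ) := by exact_mod_cast hk
    linarith
  have hcard : k + 1 ≤ 1 +
      (⌊((k : ℝ) - 1) * Real.logb ((p : ℝ) / (|f.coeff 0| : ℝ)) (p : ℝ)⌋).toNat + 1 := by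
    omega
  -- Step 2: integer factors
  have hgne : ∀ i, g i ≠ 0 := by
    intro i h
    have := hg i
    rw [h] at this
    simp at this
  choose Q c hc hQprim hQmap using fun i => exists_int_poly (g i) (hgne i)
  have hdegQ : ∀ i, 0 < (Q i).natDegree := by
    intro i
    have h1 : ((Q i).map (Int.castRingHom ℚ)).natDegree = (Q i).natDegree :=
      Polynomial.natDegree_map_eq_of_injective Int.cast_injective _
    rw [hQmap i, Polynomial.natDegree_C_mul (hc i)] at h1
    rw [← h1]
    exact hg i
  have hPprim : (∏ i, Q i).IsPrimitive := by
    apply Finset.prod_induction _ Polynomial.IsPrimitive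
      (fun a b ha hb => ha.mul hb) Polynomial.isPrimitive_one
    exact fun i _ => hQprim i
  have hcprod : (∏ i, c i) ≠ 0 := Finset.prod_ne_zero_iff.mpr (fun i _ => hc i)
  have hPmap : (∏ i, Q i).map (Int.castRingHom ℚ)
      = Polynomial.C (∏ i, c i) * f.map (Int.castRingHom ℚ) := by
    rw [Polynomial.map_prod]
    calc ∏ i, (Q i).map (Int.castRingHom ℚ) = ∏ i, (Polynomial.C (c i) * g i) :=
          Finset.prod_congr rfl fun i _ => hQmap i
      _ = (∏ i, Polynomial.C (c i)) * ∏ i, g i := Finset.prod_mul_distrib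
      _ = Polynomial.C (∏ i, c i) * f.map (Int.castRingHom ℚ) := by
          rw [← map_prod (Polynomial.C : ℚ →+* Polynomial ℚ), ← hprod]
  have hPdvd : (∏ i, Q i) ∣ f := by
    refine dvd_trans ?_ f.primPart_dvd
    apply hPprim.dvd_of_fraction_map_dvd_fraction_map (K := ℚ)
    rw [algebraMap_int_eq]
    have h1 : (∏ i, Q i).map (Int.castRingHom ℚ) ∣ f.map (Int.castRingHom ℚ) := by
      refine Dvd.intro_left (Polynomial.C (∏ i, c i)⁻¹) ?_
      rw [hPmap, ← mul_assoc, ← Polynomial.C_mul, inv_mul_cancel₀ hcprod, Polynomial.C_1, one_mul]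
    have h2 : f.map (Int.castRingHom ℚ)
        = Polynomial.C ((f.content : ℚ)) * (f.primPart).map (Int.castRingHom ℚ) := by
      conv_lhs => rw [f.eq_C_content_mul_primPart]
      simp [Polynomial.map_mul]
    have hcf : ((f.content : ℚ)) ≠ 0 :=
      Int.cast_ne_zero.mpr (fun h => hfne (Polynomial.content_eq_zero_iff.mp h))
    have hu : IsUnit (Polynomial.C ((f.content:ℚ))) :=
      Polynomial.isUnit_C.mpr (isUnit_iff_ne_zero.mpr hcf)
    rw [h2] at h1
    exact (hu.dvd_mul_left).mp h1
  -- Step 3: counting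
  have hQdvd : ∀ i, Q i ∣ f :=
    fun i => dvd_trans (Finset.dvd_prod_of_mem _ (Finset.mem_univ i)) hPdvd
  have habs2 : ∀ i, 2 ≤ ((Q i).eval b).natAbs := by
    intro i
    have h1 := eval_abs_lt f ha0 hlead b hb (Q i) (hQdvd i) (hdegQ i)
    have h2 : (Q i).eval 0 ∣ f.eval 0 := Polynomial.eval_dvd (hQdvd i)
    have h3 : (Q i).eval 0 ≠ 0 := by
      intro h
      rw [h] at h2
      rw [← Polynomial.coeff_zero_eq_eval_zero] at h2
      exact ha0 (zero_dvd_iff.mp h2)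
    have h4 : 1 ≤ |(Q i).eval 0| := Int.one_le_abs h3
    simp only [Int.abs_eq_natAbs] at h1 h4
    omega
  choose e he hQe using fun i => (Nat.dvd_prime_pow hp).mp
    (show ((Q i).eval b).natAbs ∣ p ^ k by
      rw [← hfb]; exact Int.natAbs_dvd_natAbs.mpr (Polynomial.eval_dvd (hQdvd i)))
  have he1 : ∀ i, 1 ≤ e i := by
    intro i
    by_contra h
    have h0 : e i = 0 := by omega
    have := habs2 i
    rw [hQe i, h0, pow_zero] at this
    omega
  have hsum_le : (∑ i, e i) ≤ k := by
    have hPe : ((∏ i, Q i).eval b).natAbs = ∏ i, ((Q i).eval b).natAbs := by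
      rw [Polynomial.eval_prod]
      exact map_prod Int.natAbsHom (fun i => (Q i).eval b) Finset.univ
    have hdvd : p ^ (∑ i, e i) ∣ p ^ k := by
      rw [← hfb]
      have h1 : ((∏ i, Q i).eval b).natAbs ∣ (f.eval b).natAbs :=
        Int.natAbs_dvd_natAbs.mpr (Polynomial.eval_dvd hPdvd)
      have h2 : p ^ (∑ i, e i) = ((∏ i, Q i).eval b).natAbs := by
        rw [hPe, ← Finset.prod_pow_eq_pow_sum]
        exact Finset.prod_congr rfl fun i _ => (hQe i).symm
      rw [h2]
      exact h1
    exact (Nat.pow_dvd_pow_iff_le_right hp.one_lt).mp hdvd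
  have hsum_ge : ∀ (n : ℕ) (e' : Fin n → ℕ), (∀ i, 1 ≤ e' i) → n ≤ ∑ i, e' i := by
    intro n e' he'
    calc n = ∑ _i : Fin n, 1 := by simp
      _ ≤ ∑ i, e' i := Finset.sum_le_sum (fun i _ => he' i)
  have := hsum_ge _ e he1
  omega
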